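/- For 0 < q < 1, v > -1 and dμ(x) = e(−x⁶; q⁶) x^{2v+1} d_q x, the Carleman series converges: ∑_{n=1}^∞ 1/s_{2n}^{1/(2n)} < ∞, i.e. μ fails Carleman's criterion (even though it is determinate). -/

import Mathlib

open Filter Real Topology
/-- Infinite q-Pochhammer symbol `(x; q)_∞ = ∏_{i≥0} (1 - q^i x)`. -/
noncomputable def qPochInf (x q : ℝ) : ℝ := ∏' i : ℕ, (1 - q ^ i * x)

lemma aux_mult {Q : NNReal} (hQ : Q < 1) (c : NNReal) : Multipliable fun i : ℕ => 1 + Q ^ i * c := by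
  have hb : ∀ s : Finset ℕ, ∏ i ∈ s, (1 + Q ^ i * c) ≤ (Real.exp (c * (1 - (Q:ℝ))⁻¹)).toNNReal := by
    intro s
    rw [← NNReal.coe_le_coe, NNReal.coe_prod]
    have h1 : ∀ i ∈ s, ((1 + Q ^ i * c : NNReal) : ℝ) ≤ Real.exp ((Q:ℝ) ^ i * c) := by
      intro i _
      push_cast
      rw [add_comm]
      exact Real.add_one_le_exp _
    calc ∏ i ∈ s, ((1 + Q ^ i * c : NNReal) : ℝ) ≤ ∏ i ∈ s, Real.exp ((Q:ℝ)^i * c) :=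
          Finset.prod_le_prod (fun i _ => by positivity) h1
      _ = Real.exp (∑ i ∈ s, (Q:ℝ)^i * c) := by rw [Real.exp_sum]
      _ ≤ Real.exp ((c:ℝ) * (1 - (Q:ℝ))⁻¹) := by
          apply Real.exp_le_exp.2
          rw [← Finset.sum_mul]
          rw [mul_comm]
          apply mul_le_mul_of_nonneg_left _ c.coe_nonneg
          calc ∑ i ∈ s, (Q:ℝ)^i ≤ ∑' i : ℕ, (Q:ℝ)^i :=
                Summable.sum_le_tsum s (fun i _ => by positivity)
                  (summable_geometric_of_lt_one Q.coe_nonneg (by exact_mod_cast hQ))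
            _ = (1 - (Q:ℝ))⁻¹ := tsum_geometric_of_lt_one Q.coe_nonneg (by exact_mod_cast hQ)
      _ ≤ ((Real.exp ((c:ℝ) * (1 - (Q:ℝ))⁻¹)).toNNReal : ℝ) := by
          rw [Real.coe_toNNReal _ (Real.exp_nonneg _)]
  have hlub : IsLUB (Set.range fun s : Finset ℕ => ∏ i ∈ s, (1 + Q ^ i * c)) _ :=
    isLUB_csSup (Set.range_nonempty _) ⟨_, Set.forall_mem_range.2 hb⟩
  exact (hasProd_of_isLUB_of_one_le _ (fun i => le_self_add) hlub).multipliable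


lemma aux_poch {Q : NNReal} (hQ : Q < 1) (c : NNReal) :
    qPochInf (-(c : ℝ)) (Q : ℝ) = ((∏' i : ℕ, (1 + Q ^ i * c) : NNReal) : ℝ) := by
  unfold qPochInf
  have h1 : ∀ i : ℕ, (1 - (Q:ℝ) ^ i * (-(c:ℝ))) = ((1 + Q ^ i * c : NNReal) : ℝ) := by
    intro i; push_cast; ring
  rw [tprod_congr h1]
  exact ((aux_mult hQ c).map_tprod NNReal.toRealHom.toMonoidHom NNReal.continuous_coe).symm


lemma prod_zpow_sum {ι : Type*} (x : NNReal) (hx : x ≠ 0) (s : Finset ι) (f : ι → ℤ) :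
    ∏ i ∈ s, x ^ f i = x ^ (∑ i ∈ s, f i) := by
  classical
  induction s using Finset.induction with
  | empty => simp
  | insert _ _ hi ih => rw [Finset.prod_insert hi, Finset.sum_insert hi, ih, zpow_add₀ hx]

lemma sum_aux (j : ℕ) : ∑ i ∈ Finset.range j, (6*(i:ℤ) - 6*(j:ℤ)) = -(3*(j:ℤ)^2+3*(j:ℤ)) := by
  induction j with
  | zero => simp
  | succ n ih =>
    rw [Finset.sum_range_succ,
      Finset.sum_congr rfl (fun i _ => by push_cast; ring :
        ∀ i ∈ Finset.range n, (6*(i:ℤ) - 6*((n+1:ℕ):ℤ)) = (6*(i:ℤ) - 6*(n:ℤ)) + (-6)),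
      Finset.sum_add_distrib, ih, Finset.sum_const, Finset.card_range]
    push_cast; ring

lemma aux_bounds {q : NNReal} (hq0 : 0 < q) (hq1 : q < 1) (j : ℕ) :
    q ^ (-(3*(j:ℤ)^2+3*j)) ≤ (∏' i : ℕ, (1 + (q^6)^i * (q^(-(j:ℤ)))^(6:ℕ)))
    ∧ (∏' i : ℕ, (1 + (q^6)^i * (q^(-(j:ℤ)))^(6:ℕ)))
      ≤ q ^ (-(3*(j:ℤ)^2+3*j)) * (2^j * ∏' t : ℕ, (1 + (q^6)^t * 1)) := by
  have hq : q ≠ 0 := hq0.ne'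
  have hQ1 : q^6 < 1 := pow_lt_one₀ (zero_le : 0 ≤ q) hq1 (by norm_num)
  set A : ℕ → NNReal := fun i => if i < j then q ^ (6*(i:ℤ) - 6*j) else 1 with hA
  set B1 : ℕ → NNReal := fun i => if i < j then 1 + q ^ (6*(j - i)) else 1 with hB1
  set B2 : ℕ → NNReal := fun i => if i < j then 1 else 1 + q ^ (6*(i - j)) with hB2
  have hfac : ∀ i : ℕ, (q^6)^i * (q^(-(j:ℤ)))^(6:ℕ) = q ^ (6*(i:ℤ) - 6*j) := by
    intro i
    rw [← pow_mul, ← zpow_natCast q (6*i), ← zpow_natCast (q ^ (-(j:ℤ))) 6, ← zpow_mul,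
      ← zpow_add₀ hq]
    congr 1
    push_cast; ring
  have hF : ∀ i : ℕ, (1 + (q^6)^i * (q^(-(j:ℤ)))^(6:ℕ)) = A i * B1 i * B2 i := by
    intro i
    rw [hfac i]
    by_cases h : i < j
    · simp only [hA, hB1, hB2, if_pos h]
      rw [mul_one, mul_add, mul_one, ← zpow_natCast q (6*(j-i)), ← zpow_add₀ hq]
      have : 6*(i:ℤ) - 6*j + (6*(j-i):ℕ) = 0 := by
        push_cast [Nat.cast_sub h.le]; ring
      rw [this, zpow_zero, add_comm]
    · simp only [hA, hB1, hB2, if_neg h]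
      rw [one_mul, one_mul, ← zpow_natCast q (6*(i-j))]
      congr 2
      push_cast [Nat.cast_sub (not_lt.1 h)]; ring
  have MA : Multipliable A := by
    apply multipliable_of_ne_finset_one (s := Finset.range j)
    intro b hb
    have hb' : ¬ b < j := by simpa using hb
    simp [hA, hb']
  have MB1 : Multipliable B1 := by
    apply multipliable_of_ne_finset_one (s := Finset.range j)
    intro b hb
    have hb' : ¬ b < j := by simpa using hb
    simp [hB1, hb']
  have MB2 : Multipliable B2 := by
    have hinj : Function.Injective (fun t : ℕ => t + j) := add_left_injective j
    rw [← Function.Injective.multipliable_iff hinj ?_]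
    · apply ((aux_mult hQ1 1).congr (g := fun t => B2 ((fun t => t + j) t)))
      intro t
      simp only [hB2]
      rw [if_neg (by omega : ¬ t + j < j)]
      rw [mul_one, ← pow_mul]
      congr 2
      omega
    · intro x hx
      have hxj : x < j := by
        by_contra h
        exact hx ⟨x - j, by simpa using Nat.sub_add_cancel (not_lt.1 h)⟩
      simp [hB2, hxj]
  have MF : Multipliable (fun i : ℕ => 1 + (q^6)^i * (q^(-(j:ℤ)))^(6:ℕ)) := aux_mult hQ1 _
  have hsplit : (∏' i : ℕ, (1 + (q^6)^i * (q^(-(j:ℤ)))^(6:ℕ)))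
      = (∏' i, A i) * (∏' i, B1 i) * (∏' i, B2 i) := by
    rw [tprod_congr hF, Multipliable.tprod_mul (MA.mul MB1) MB2, Multipliable.tprod_mul MA MB1]
  have htA : (∏' i, A i) = q ^ (-(3*(j:ℤ)^2+3*j)) := by
    rw [tprod_eq_prod (s := Finset.range j) (fun b hb => by
      have hb' : ¬ b < j := by simpa using hb
      simp [hA, hb'])]
    rw [Finset.prod_congr rfl (fun i hi => if_pos (Finset.mem_range.1 hi) :
        ∀ i ∈ Finset.range j, A i = q ^ (6*(i:ℤ) - 6*j)),
      prod_zpow_sum q hq, sum_aux]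
  have htB2 : (∏' i, B2 i) = ∏' t : ℕ, (1 + (q^6)^t * 1) := by
    have hinj : Function.Injective (fun t : ℕ => t + j) := add_left_injective j
    rw [← Function.Injective.tprod_eq hinj (f := B2) ?_]
    · apply tprod_congr
      intro t
      simp only [hB2]
      rw [if_neg (by omega : ¬ t + j < j), mul_one, ← pow_mul]
      congr 2
      omega
    · intro x hx
      rcases lt_or_ge x j with h | h
      · exact absurd (by simp [hB2, h] : B2 x = 1) hx
      · exact ⟨x - j, by simpa using Nat.sub_add_cancel h⟩
  have hB1_one : (1:NNReal) ≤ ∏' i, B1 i := one_le_tprod (fun i => by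
    by_cases h : i < j <;> simp [hB1, h])
  have hB2_one : (1:NNReal) ≤ ∏' i, B2 i := one_le_tprod (fun i => by
    by_cases h : i < j <;> simp [hB2, h])
  have htB1_le : (∏' i, B1 i) ≤ 2^j := by
    have : (∏' i, B1 i) ≤ ∏' i : ℕ, (if i < j then (2:NNReal) else 1) := by
      apply Multipliable.tprod_le_tprod _ MB1
      · exact multipliable_of_ne_finset_one (s := Finset.range j) (fun b hb => by
          have hb' : ¬ b < j := by simpa using hb
          simp [hb'])
      · intro i
        by_cases h : i < j
        · simp only [hB1, if_pos h]
          have : q ^ (6*(j-i)) ≤ 1 := pow_le_one₀ (zero_le : 0 ≤ q) hq1.le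
          calc 1 + q ^ (6*(j-i)) ≤ 1 + 1 := by exact add_le_add_right this 1
            _ = 2 := by norm_num
        · simp [hB1, h]
    refine this.trans ?_
    rw [tprod_eq_prod (s := Finset.range j) (fun b hb => by
      have hb' : ¬ b < j := by simpa using hb
      simp [hb'])]
    rw [Finset.prod_congr rfl (fun i hi => if_pos (Finset.mem_range.1 hi)),
      Finset.prod_const, Finset.card_range]
  constructor
  · rw [hsplit, htA]
    calc q ^ (-(3*(j:ℤ)^2+3*j)) = q ^ (-(3*(j:ℤ)^2+3*j)) * 1 * 1 := by ring
      _ ≤ _ := by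
        apply mul_le_mul (mul_le_mul le_rfl hB1_one zero_le zero_le) hB2_one
          zero_le zero_le
  · rw [hsplit, htA, htB2, mul_assoc]
    exact mul_le_mul le_rfl (mul_le_mul htB1_le le_rfl zero_le zero_le)
      zero_le zero_le

set_option maxHeartbeats 1600000 in
/-- For `dμ(x) = e(−x⁶; q⁶) x^{2v+1} d_q x`, the Carleman series converges. -/
theorem q_exponential_weight_carleman_fails (q v : ℝ) (hq0 : 0 < q) (hq1 : q < 1)
    (hv : -1 < v) (s : ℕ → ℝ)
    (hs : ∀ m : ℕ, s m = (1 - q) * ∑' k : ℤ,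
      (q ^ (k : ℤ)) ^ ((m : ℝ) + 2 * v + 2) / qPochInf (-((q ^ (k : ℤ)) ^ (6 : ℕ))) (q ^ (6 : ℕ))) :
    Summable (fun n : ℕ => ((s (2 * (n + 1))) ^ ((2 * ((n : ℝ) + 1))⁻¹))⁻¹) := by
  set qn : NNReal := ⟨q, hq0.le⟩ with hqn
  have hqnc : (qn : ℝ) = q := rfl
  have hqn0 : 0 < qn := by exact_mod_cast hq0
  have hqn1 : qn < 1 := by exact_mod_cast hq1
  have hQ1 : qn ^ 6 < 1 := pow_lt_one₀ (zero_le : 0 ≤ qn) hqn1 (by norm_num)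
  set G : ℤ → NNReal := fun k => ∏' i : ℕ, (1 + (qn^6)^i * (qn^k)^(6:ℕ)) with hG
  have hPoch : ∀ k : ℤ, qPochInf (-((q ^ (k : ℤ)) ^ (6 : ℕ))) (q ^ (6 : ℕ)) = ((G k : ℝ)) := by
    intro k
    have h := aux_poch hQ1 ((qn^k)^(6:ℕ))
    have h1 : (((qn^k)^(6:ℕ) : NNReal) : ℝ) = (q ^ (k:ℤ))^(6:ℕ) := by push_cast; rfl
    have h2 : ((qn^6 : NNReal) : ℝ) = q ^ (6:ℕ) := by push_cast; rfl
    rw [h1, h2] at h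
    rw [h]
  have h1G : ∀ k : ℤ, 1 ≤ G k := fun k => one_le_tprod (fun i => le_self_add)
  have h0G : ∀ k : ℤ, (0:ℝ) < (G k : ℝ) := fun k => by
    exact_mod_cast lt_of_lt_of_le one_pos (h1G k)
  set C : ℝ := ((∏' t : ℕ, (1 + (qn^6)^t * 1) : NNReal) : ℝ) with hC
  have hC1 : (1:ℝ) ≤ C := by
    rw [hC]
    exact_mod_cast (one_le_tprod (fun t => le_self_add) : (1:NNReal) ≤ ∏' t : ℕ, (1 + (qn^6)^t * 1))
  have h1q : 0 < 1 - q := by linarith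
  -- zpow to rpow conversion
  have hzr : ∀ e : ℤ, ((qn ^ e : NNReal) : ℝ) = q ^ (e : ℝ) := by
    intro e
    rw [Real.rpow_intCast]
    push_cast
    rfl
  have key : ∀ n : ℕ, ((s (2 * (n + 1))) ^ ((2 * ((n : ℝ) + 1))⁻¹))⁻¹
      ≤ ((1-q)⁻¹ * (2*C) * q ^ (-(2/3) : ℝ)) * (q ^ ((6:ℝ)⁻¹)) ^ n := by
    intro n
    set m : ℕ := n + 1 with hm
    set M : ℝ := ((2 * m : ℕ) : ℝ) + 2 * v + 2 with hM
    have hMpos : 0 < M := by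
      rw [hM]; push_cast; nlinarith [Nat.one_le_iff_ne_zero.2 (by omega : m ≠ 0)]
    have hM2m : M = 2 * (m:ℝ) + 2*v + 2 := by rw [hM]; push_cast; ring
    set a : ℤ → ℝ := fun k => (q ^ k) ^ M / (G k : ℝ) with ha
    have ha_nonneg : ∀ k, 0 ≤ a k := by
      intro k
      apply div_nonneg _ (h0G k).le
      exact Real.rpow_nonneg (zpow_nonneg hq0.le k) M
    -- numerator as rpow
    have hnum : ∀ k : ℤ, (q ^ k) ^ M = q ^ ((k : ℝ) * M) := by
      intro k
      rw [Real.rpow_mul hq0.le, Real.rpow_intCast]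
    have hsummable : Summable a := by
      apply Summable.of_nat_of_neg
      · refine Summable.of_nonneg_of_le (fun n' => ha_nonneg _)
          (f := fun n' : ℕ => (q ^ M) ^ n') ?_ ?_
        · intro n'
          have h1 : a (n':ℤ) ≤ (q ^ (n':ℤ)) ^ M :=
            div_le_self (Real.rpow_nonneg (zpow_nonneg hq0.le _) M)
              (by exact_mod_cast h1G (n':ℤ))
          refine h1.trans_eq ?_
          show (q ^ (n':ℤ)) ^ M = (q ^ M) ^ n'
          rw [hnum, show ((n':ℤ):ℝ) * M = M * (n':ℝ) by push_cast; ring,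
            Real.rpow_mul hq0.le, Real.rpow_natCast]
        · exact summable_geometric_of_lt_one (Real.rpow_nonneg hq0.le M)
            (Real.rpow_lt_one hq0.le hq1 hMpos)
      · refine Summable.of_nonneg_of_le (fun n' => ha_nonneg _)
          (f := fun n' : ℕ => q ^ (-((M-2)^2/12) : ℝ) * q ^ n') ?_ ?_
        · intro n'
          have hGlow : ((qn ^ (-(3*(n':ℤ)^2+3*n')) : NNReal) : ℝ) ≤ (G (-(n':ℤ)) : ℝ) := by
            exact_mod_cast (aux_bounds hqn0 hqn1 n').1
          rw [hzr] at hGlow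
          set e1 : ℝ := 3*(n':ℝ)^2+3*(n':ℝ) with he1
          rw [show ((-(3*(n':ℤ)^2+3*n') : ℤ) : ℝ) = -e1 by rw [he1]; push_cast; ring] at hGlow
          have hnum2 : a (-(n':ℤ)) = q ^ (-(n':ℝ)*M) / (G (-(n':ℤ)) : ℝ) := by
            show (q ^ (-(n':ℤ))) ^ M / (G (-(n':ℤ)) : ℝ) = _
            rw [hnum]
            congr 2
            push_cast; ring
          calc a (-(n':ℤ)) = q ^ (-(n':ℝ)*M) / (G (-(n':ℤ)) : ℝ) := hnum2
            _ ≤ q ^ (-(n':ℝ)*M) / q ^ (-e1) :=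
                div_le_div_of_nonneg_left (Real.rpow_nonneg hq0.le _)
                  (Real.rpow_pos_of_pos hq0 _) hGlow
            _ = q ^ (-(n':ℝ)*M + e1) := by rw [← Real.rpow_sub hq0, sub_neg_eq_add]
            _ ≤ q ^ (-((M-2)^2/12) + (n':ℝ)) :=
                Real.rpow_le_rpow_of_exponent_ge hq0 hq1.le
                  (by rw [he1]; nlinarith [sq_nonneg (6*(n':ℝ) - (M-2))])
            _ = q ^ (-((M-2)^2/12) : ℝ) * q ^ (n':ℕ) := by
                rw [Real.rpow_add hq0, Real.rpow_natCast]
        · exact Summable.mul_left _ (summable_geometric_of_lt_one hq0.le hq1)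
    have hseq : s (2 * (n+1)) = (1 - q) * ∑' k : ℤ, a k := by
      rw [hs (2*(n+1))]
      congr 1
      apply tsum_congr
      intro k
      rw [ha, hPoch k]
    -- choose j = m / 3
    set j : ℕ := m / 3 with hj
    have hj1 : 3 * (j:ℝ) ≤ (m:ℝ) := by exact_mod_cast (by omega : 3 * j ≤ m)
    have hj2 : (m:ℝ) - 2 ≤ 3 * (j:ℝ) := by
      have : m ≤ 3 * j + 2 := by omega
      have := (by exact_mod_cast this : (m:ℝ) ≤ 3 * (j:ℝ) + 2)
      linarith
    have hjm : (j:ℝ) ≤ (m:ℝ) := by linarith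
    set Z : ℝ := 2^j * C with hZ
    have hZpos : 0 < Z := by
      rw [hZ]; positivity
    have hZ1 : (1:ℝ) ≤ Z := by
      rw [hZ]
      calc (1:ℝ) = 1 * 1 := by norm_num
        _ ≤ 2^j * C := mul_le_mul (one_le_pow₀ (by norm_num)) hC1 (by norm_num) (by positivity)
    set D : ℝ := (j:ℝ)*M - (3*(j:ℝ)^2+3*(j:ℝ)) with hD
    -- lower bound a (-j)
    have hGup : (G (-(j:ℤ)) : ℝ) ≤ q ^ (-(3*(j:ℝ)^2+3*(j:ℝ))) * Z := by
      have h2 : (G (-(j:ℤ)) : ℝ) ≤ ((qn ^ (-(3*(j:ℤ)^2+3*j)) : NNReal) : ℝ) * Z := by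
        rw [hZ, hC]
        exact_mod_cast (aux_bounds hqn0 hqn1 j).2
      rw [hzr, show ((-(3*(j:ℤ)^2+3*j) : ℤ) : ℝ) = -(3*(j:ℝ)^2+3*(j:ℝ)) by push_cast; ring] at h2
      exact h2
    have hnum2 : a (-(j:ℤ)) = q ^ (-(j:ℝ)*M) / (G (-(j:ℤ)) : ℝ) := by
      show (q ^ (-(j:ℤ))) ^ M / (G (-(j:ℤ)) : ℝ) = _
      rw [hnum]
      congr 2
      push_cast; ring
    have halow : q ^ (-D) / Z ≤ a (-(j:ℤ)) := by
      have h3 : q ^ (-D) / Z = q ^ (-(j:ℝ)*M) / (q ^ (-(3*(j:ℝ)^2+3*(j:ℝ))) * Z) := by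
        rw [eq_div_iff (by positivity)]
        rw [div_mul_eq_mul_div, mul_comm (q ^ (-D)) _, mul_assoc, div_eq_iff (by positivity),
          mul_comm (q ^ (-(3*(j:ℝ)^2+3*(j:ℝ)))) _, mul_assoc, ← Real.rpow_add hq0,
          mul_comm Z _]
        congr 2
        rw [hD]; ring
      rw [h3, hnum2]
      exact div_le_div_of_nonneg_left (Real.rpow_nonneg hq0.le _) (h0G _) hGup
    have hslow : (1-q) * (q ^ (-D) / Z) ≤ s (2 * (n+1)) := by
      rw [hseq]
      exact mul_le_mul_of_nonneg_left
        (halow.trans (Summable.le_tsum hsummable _ (fun k _ => ha_nonneg k))) h1q.le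
    set B : ℝ := (1-q) * (q ^ (-D) / Z) with hB
    have hBpos : 0 < B := by
      rw [hB]
      exact mul_pos h1q (div_pos (Real.rpow_pos_of_pos hq0 _) hZpos)
    set e : ℝ := (2 * ((n:ℝ) + 1))⁻¹ with he
    have hme : (m:ℝ) = (n:ℝ) + 1 := by rw [hm]; push_cast; ring
    have hepos : 0 < e := by rw [he]; positivity
    have hele : e ≤ 1 := by
      rw [he]
      rw [inv_le_one_iff₀]
      right; nlinarith [Nat.cast_nonneg (α := ℝ) n]
    -- main term estimate
    have hmain : ((s (2 * (n + 1))) ^ e)⁻¹ ≤ (1-q)⁻¹ * (2*C) * q ^ (D * e) := by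
      have h4 : B ^ e ≤ (s (2*(n+1))) ^ e := Real.rpow_le_rpow hBpos.le hslow hepos.le
      have h5 : ((s (2 * (n + 1))) ^ e)⁻¹ ≤ (B ^ e)⁻¹ :=
        inv_anti₀ (Real.rpow_pos_of_pos hBpos e) h4
      refine h5.trans ?_
      have h6 : (B ^ e)⁻¹ = (1-q)^(-e) * (q ^ (D*e) * Z ^ e) := by
        rw [← Real.rpow_neg hBpos.le, hB, Real.mul_rpow h1q.le (by positivity),
          Real.div_rpow (Real.rpow_nonneg hq0.le _) hZpos.le,
          ← Real.rpow_mul hq0.le, neg_mul_neg, Real.rpow_neg hZpos.le, div_eq_mul_inv, inv_inv]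
      rw [h6]
      have hinv1 : (1:ℝ) ≤ (1-q)⁻¹ := (one_le_inv₀ h1q).2 (by linarith)
      have hb1 : (1-q)^(-e) ≤ (1-q)⁻¹ := by
        rw [Real.rpow_neg h1q.le, ← Real.inv_rpow h1q.le]
        calc ((1-q)⁻¹) ^ e ≤ ((1-q)⁻¹) ^ (1:ℝ) :=
              Real.rpow_le_rpow_of_exponent_le hinv1 hele
          _ = (1-q)⁻¹ := Real.rpow_one _
      have hZe : Z ^ e ≤ 2 * C := by
        rw [hZ, Real.mul_rpow (by positivity) (by positivity)]
        have hje : (j:ℝ) * e ≤ 1 := by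
          rw [he, mul_inv_le_iff₀ (by positivity)]
          nlinarith [hjm, hme]
        apply mul_le_mul ?_ ?_ (Real.rpow_nonneg (by linarith) e) (by norm_num)
        · rw [← Real.rpow_natCast 2 j, ← Real.rpow_mul (by norm_num : (0:ℝ) ≤ 2)]
          calc (2:ℝ) ^ ((j:ℝ)*e) ≤ (2:ℝ) ^ (1:ℝ) :=
                Real.rpow_le_rpow_of_exponent_le one_le_two hje
            _ = 2 := Real.rpow_one 2
        · calc C ^ e ≤ C ^ (1:ℝ) := Real.rpow_le_rpow_of_exponent_le hC1 hele
            _ = C := Real.rpow_one C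
      calc (1-q)^(-e) * (q^(D*e) * Z^e)
          ≤ (1-q)⁻¹ * (q^(D*e) * (2*C)) := by
            apply mul_le_mul hb1 (mul_le_mul le_rfl hZe (Real.rpow_nonneg hZpos.le e)
              (Real.rpow_nonneg hq0.le _)) _ (by linarith)
            positivity
        _ = (1-q)⁻¹ * (2*C) * q^(D*e) := by ring
    have hDe : (m:ℝ)/6 - 5/6 ≤ D * e := by
      rw [he, hD, hM2m, ← div_eq_mul_inv, le_div_iff₀ (by positivity), ← hme]
      nlinarith [mul_nonneg (by linarith : (0:ℝ) ≤ 3*(j:ℝ)-(m:ℝ)+2)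
          (by linarith : (0:ℝ) ≤ (m:ℝ)-3*(j:ℝ)),
        mul_nonneg (Nat.cast_nonneg (α := ℝ) j) (by linarith : (0:ℝ) ≤ 2*v+2)]
    have hq6 : q ^ (D*e) ≤ q ^ ((m:ℝ)/6 - 5/6) :=
      Real.rpow_le_rpow_of_exponent_ge hq0 hq1.le hDe
    refine hmain.trans ?_
    calc (1-q)⁻¹ * (2*C) * q^(D*e) ≤ (1-q)⁻¹ * (2*C) * q^((m:ℝ)/6-5/6) := by
          apply mul_le_mul_of_nonneg_left hq6
          positivity
      _ = ((1-q)⁻¹ * (2*C) * q ^ (-(2/3) : ℝ)) * (q ^ ((6:ℝ)⁻¹)) ^ n := by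
          rw [show (m:ℝ)/6 - 5/6 = -(2/3) + (6:ℝ)⁻¹ * (n:ℝ) by rw [hme]; ring,
            Real.rpow_add hq0, ← Real.rpow_natCast (q ^ ((6:ℝ)⁻¹)) n,
            ← Real.rpow_mul hq0.le]
          ring
  -- assemble
  have hs_nonneg : ∀ m' : ℕ, 0 ≤ s m' := by
    intro m'
    rw [hs m']
    refine mul_nonneg h1q.le (tsum_nonneg fun k => div_nonneg
      (Real.rpow_nonneg (zpow_nonneg hq0.le _) _) ?_)
    rw [hPoch k]
    exact (G k).coe_nonneg
  refine Summable.of_nonneg_of_le (fun n => ?_) key ?_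
  · exact inv_nonneg.2 (Real.rpow_nonneg (hs_nonneg _) _)
  · exact Summable.mul_left _ (summable_geometric_of_lt_one
      (Real.rpow_nonneg hq0.le _) (Real.rpow_lt_one hq0.le hq1 (by norm_num)))
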